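/- arXiv:2601.23101 — 4 statements merged into one kernel-verified Lean document; each statement's English description precedes it below -/
import Mathlib

section
/- For all integers l ≥ 3 and l_1 ≥ 1, the bull B(l, l_1) is a bipartite minor of the cycle C_{l+2l_1}. -/
open SimpleGraph

set_option maxHeartbeats 1600000

/-- Finite simple graphs are modelled as subgraphs of the complete graph on `ℕ`. -/
abbrev FG : Type := SimpleGraph.Subgraph (⊤ : SimpleGraph ℕ)

/-- Build a graph from a vertex set and a (not necessarily symmetric) edge description. -/
def ofRel (V : Set ℕ) (r : ℕ → ℕ → Prop) : FG where
  verts := V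
  Adj x y := x ≠ y ∧ x ∈ V ∧ y ∈ V ∧ (r x y ∨ r y x)
  adj_sub := fun h => (SimpleGraph.top_adj _ _).mpr h.1
  edge_vert := fun h => h.2.1
  symm := ⟨fun _ _ h => ⟨h.1.symm, h.2.2.1, h.2.1, h.2.2.2.symm⟩⟩

/-- The cycle `C_n` on `n` vertices. -/
def cycleFG (n : ℕ) : FG := ofRel {x | x < n} (fun i j => j = (i + 1) % n)

/-- The path `P_n` on `n` vertices. -/
def pathFG (n : ℕ) : FG := ofRel {x | x < n} (fun i j => j = i + 1)

/-- The bull `B(l, l1)`: a cycle (snout) of length `l` on `0,…,l-1`, together with a horn,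
namely a path on the `l1` vertices `l,…,l+l1-1` joined by an edge to the snout vertex `0`. -/
def bullFG (l l1 : ℕ) : FG :=
  ofRel {x | x < l + l1}
    (fun i j => (i < l ∧ j = (i + 1) % l) ∨ (l ≤ i ∧ j = i + 1 ∧ j < l + l1) ∨ (i = 0 ∧ j = l))

/-- The one-eared dog `D(l, l1)`: a snout cycle of length `l` on `0,…,l-1` together with an ear,
namely a cycle of length `l1` sharing the snout edge `{0,1}` (its `l1 - 2` new vertices
are `l,…,l+l1-3`). -/
def dog1FG (l l1 : ℕ) : FG :=
  ofRel {x | x < l + l1 - 2}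
    (fun i j => (i < l ∧ j = (i + 1) % l) ∨ (i = 1 ∧ j = l) ∨
      (l ≤ i ∧ j = i + 1 ∧ j ≤ l + l1 - 3) ∨ (i = l + l1 - 3 ∧ j = 0))

/-- The two-eared dog `D(l, l1, l2)`: a snout cycle of length `l` on `0,…,l-1` together with
an ear of length `l1` sharing the snout edge `{0,1}` (new vertices `l,…,l+l1-3`) and
an ear of length `l2` sharing the snout edge `{2,3}` (new vertices `l+l1-2,…,l+l1+l2-5`),
so the ears are attached at the consecutive snout vertices `0,1,2,3`. -/
def dog2FG (l l1 l2 : ℕ) : FG :=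
  ofRel {x | x < l + l1 + l2 - 4}
    (fun i j => (i < l ∧ j = (i + 1) % l) ∨ (i = 1 ∧ j = l) ∨
      (l ≤ i ∧ j = i + 1 ∧ j ≤ l + l1 - 3) ∨ (i = l + l1 - 3 ∧ j = 0) ∨
      (i = 3 ∧ j = l + l1 - 2) ∨ (l + l1 - 2 ≤ i ∧ j = i + 1 ∧ j ≤ l + l1 + l2 - 5) ∨
      (i = l + l1 + l2 - 5 ∧ j = 2))

/-- The tree `T_l`: a path `0,…,l` of length `l` (i.e. on `l+1` vertices), with the two extra
leaves `l+1, l+2` attached to the endpoint `0` and the two extra leaves `l+3, l+4` attached to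
the endpoint `l`.  (Equivalently: obtained from two paths on three vertices and a path of
length `l` by identifying the endpoints of the latter with the internal vertices of the
former two.) -/
def treeFG (l : ℕ) : FG :=
  ofRel {x | x < l + 5}
    (fun i j => (j = i + 1 ∧ j ≤ l) ∨ (i = 0 ∧ (j = l + 1 ∨ j = l + 2)) ∨
      (i = l ∧ (j = l + 3 ∨ j = l + 4)))

/-- The contraction of the vertices `u` and `v` in `H`: the two vertices are identified
(the merged vertex keeps the label `u`); the merged vertex is adjacent to every neighbour of
`u` or `v`. -/
def contractFG (H : FG) (u v : ℕ) : FG where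
  verts := H.verts \ {v}
  Adj x y := x ≠ y ∧ x ≠ v ∧ y ≠ v ∧
    (H.Adj x y ∨ (x = u ∧ u ∈ H.verts ∧ H.Adj v y) ∨ (y = u ∧ u ∈ H.verts ∧ H.Adj x v))
  adj_sub := fun h => (SimpleGraph.top_adj _ _).mpr h.1
  edge_vert := by
    rintro x y ⟨hxy, hxv, hyv, h | ⟨rfl, hu, h⟩ | ⟨h1, h2, h3⟩⟩
    · exact ⟨H.edge_vert h, hxv⟩
    · exact ⟨hu, hxv⟩
    · exact ⟨H.edge_vert h3, hxv⟩
  symm := by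
    constructor
    rintro x y ⟨hxy, hxv, hyv, h | ⟨h1, h2, h3⟩ | ⟨h1, h2, h3⟩⟩
    · exact ⟨hxy.symm, hyv, hxv, Or.inl h.symm⟩
    · exact ⟨hxy.symm, hyv, hxv, Or.inr (Or.inr ⟨h1, h2, h3.symm⟩)⟩
    · exact ⟨hxy.symm, hyv, hxv, Or.inr (Or.inl ⟨h1, h2, h3.symm⟩)⟩

/-- The number of connected components of a graph. -/
noncomputable def ncompFG (H : FG) : ℕ := Nat.card H.coe.ConnectedComponent

/-- `C` is the vertex set of an induced cycle of `H`: it is a finite set of vertices of `H`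
whose induced subgraph is connected and `2`-regular, i.e. is exactly a cycle (in particular
the cycle has no chord). -/
def IsInducedCycleFG (H : FG) (C : Set ℕ) : Prop :=
  C ⊆ H.verts ∧ C.Finite ∧ 3 ≤ C.ncard ∧ ((H.induce C).coe).Connected ∧
    ∀ x ∈ C, {y | y ∈ C ∧ H.Adj x y}.ncard = 2

/-- The cycle with vertex set `C` is non-separating in `H`: deleting it does not increase the
number of connected components. -/
def NonSeparatingFG (H : FG) (C : Set ℕ) : Prop :=
  ncompFG (H.deleteVerts C) ≤ ncompFG H

/-- The contraction of `u` and `v` in `H` is admissible: `u` and `v` have a common neighbour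
`w` such that the path `u, w, v` is part of an induced non-separating cycle of `H`. -/
def AdmissiblePair (H : FG) (u v : ℕ) : Prop :=
  u ≠ v ∧ ∃ w, H.Adj u w ∧ H.Adj w v ∧
    ∃ C : Set ℕ, u ∈ C ∧ w ∈ C ∧ v ∈ C ∧ IsInducedCycleFG H C ∧ NonSeparatingFG H C

/-- A single bipartite-minor operation: `BStep G H` holds when `H` is obtained from `G` by
deleting a vertex, deleting an edge, or performing an admissible contraction. -/
inductive BStep : FG → FG → Prop
  | deleteVert (G : FG) (v : ℕ) : BStep G (G.deleteVerts {v})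
  | deleteEdge (G : FG) (e : Sym2 ℕ) : BStep G (G.deleteEdges {e})
  | contract (G : FG) (u v : ℕ) (h : AdmissiblePair G u v) : BStep G (contractFG G u v)

/-- A single minor operation: `MStep G H` holds when `H` is obtained from `G` by deleting a
vertex, deleting an edge, or contracting an edge. -/
inductive MStep : FG → FG → Prop
  | deleteVert (G : FG) (v : ℕ) : MStep G (G.deleteVerts {v})
  | deleteEdge (G : FG) (e : Sym2 ℕ) : MStep G (G.deleteEdges {e})
  | contract (G : FG) (u v : ℕ) (h : G.Adj u v) : MStep G (contractFG G u v)

/-- Two graphs are isomorphic. -/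
def IsoFG (H K : FG) : Prop := Nonempty (H.coe ≃g K.coe)

/-- `H ≤_B G`: `H` is a bipartite minor of `G`, i.e. (a graph isomorphic to) `H` can be obtained
from `G` by a sequence of vertex deletions, edge deletions and admissible contractions. -/
def BipMinor (H G : FG) : Prop :=
  ∃ H' : FG, Relation.ReflTransGen BStep G H' ∧ IsoFG H' H

/-- `H ≤_M G`: `H` is a minor of `G`, i.e. (a graph isomorphic to) `H` can be obtained from `G`
by a sequence of vertex deletions, edge deletions and edge contractions. -/
def MinorFG (H G : FG) : Prop :=
  ∃ H' : FG, Relation.ReflTransGen MStep G H' ∧ IsoFG H' H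

/-- A graph is `2`-connected if deleting any set of at most one vertex leaves a connected
graph. -/
def TwoConnectedFG (H : FG) : Prop :=
  ∀ U : Set ℕ, U.Subsingleton → ((H.deleteVerts U).coe).Connected

/-- `B` is a block of `G`: a maximal `2`-connected subgraph of `G`. -/
def IsBlockFG (G B : FG) : Prop :=
  B ≤ G ∧ TwoConnectedFG B ∧ ∀ B' : FG, B ≤ B' → B' ≤ G → TwoConnectedFG B' → B' = B

/-- A graph is bipartite iff it is `2`-colourable. -/
def BipartiteFG (H : FG) : Prop := H.coe.Colorable 2

/-- A forest is an acyclic graph. -/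
def ForestFG (H : FG) : Prop := H.coe.IsAcyclic

/-- `H` is (isomorphic to) a subgraph of `G`. -/
def IsSubgraphFG (H G : FG) : Prop := ∃ S : FG, S ≤ G ∧ IsoFG S H


/-! ### Auxiliary development for STATEMENT 0 -/

lemma ofRel_verts (V : Set ℕ) (r : ℕ → ℕ → Prop) : (ofRel V r).verts = V := rfl

lemma ofRel_adj (V : Set ℕ) (r : ℕ → ℕ → Prop) (x y : ℕ) :
    (ofRel V r).Adj x y ↔ (x ≠ y ∧ x ∈ V ∧ y ∈ V ∧ (r x y ∨ r y x)) := Iff.rfl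

lemma contractFG_verts (H : FG) (u v : ℕ) : (contractFG H u v).verts = H.verts \ {v} := rfl

lemma contractFG_adj (H : FG) (u v x y : ℕ) :
    (contractFG H u v).Adj x y ↔ (x ≠ y ∧ x ≠ v ∧ y ≠ v ∧
      (H.Adj x y ∨ (x = u ∧ u ∈ H.verts ∧ H.Adj v y) ∨ (y = u ∧ u ∈ H.verts ∧ H.Adj x v))) :=
  Iff.rfl

/-- Rewrite the `mod`-based snout adjacency into pure linear arithmetic. -/
lemma snout_iff (l : ℕ) : ∀ i j : ℕ,
    (i < l ∧ j = (i + 1) % l) ↔ (i < l ∧ ((j = i + 1 ∧ i + 1 < l) ∨ (j = 0 ∧ i + 1 = l))) := by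
  intro i j
  by_cases h : i < l
  · by_cases h2 : i + 1 < l
    · rw [Nat.mod_eq_of_lt h2]; omega
    · have h3 : i + 1 = l := by omega
      rw [h3, Nat.mod_self]; omega
  · constructor <;> (rintro ⟨h1, -⟩; exact absurd h1 h)

/-- Connectivity of a subgraph from a "parent" function decreasing a measure. -/
lemma connected_of_parent (S : FG) (x0 : ℕ) (h0 : x0 ∈ S.verts) (μ : ℕ → ℕ)
    (hp : ∀ x, x ∈ S.verts → x ≠ x0 → ∃ y, S.Adj x y ∧ μ y < μ x) :
    S.coe.Connected := by
  have key : ∀ m x (hx : x ∈ S.verts), μ x < m → S.coe.Reachable ⟨x, hx⟩ ⟨x0, h0⟩ := by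
    intro m
    induction m with
    | zero => intro x hx h; omega
    | succ m ih =>
      intro x hx h
      by_cases hx0 : x = x0
      · subst hx0; exact SimpleGraph.Reachable.refl _
      · obtain ⟨y, hadj, hlt⟩ := hp x hx hx0
        have hy : y ∈ S.verts := S.edge_vert hadj.symm
        have hcoe : S.coe.Adj ⟨x, hx⟩ ⟨y, hy⟩ := by
          rw [SimpleGraph.Subgraph.coe_adj]; exact hadj
        exact hcoe.reachable.trans (ih y hy (by omega))
  haveI : Nonempty (↥S.verts) := ⟨⟨x0, h0⟩⟩
  refine ⟨fun a b => ?_⟩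
  exact (key (μ a.1 + 1) a.1 a.2 (by omega)).trans
    ((key (μ b.1 + 1) b.1 b.2 (by omega)).symm)

lemma ncompFG_eq_one (S : FG) (h : S.coe.Connected) : ncompFG S = 1 := by
  have hne : Nonempty S.coe.ConnectedComponent :=
    ⟨S.coe.connectedComponentMk h.nonempty.some⟩
  have hss : Subsingleton S.coe.ConnectedComponent :=
    h.preconnected.subsingleton_connectedComponent
  exact Nat.card_eq_one_iff_unique.mpr ⟨hss, hne⟩

lemma ncompFG_eq_zero (S : FG) (h : S.verts = ∅) : ncompFG S = 0 := by
  have he : IsEmpty (↥S.verts) := by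
    rw [h]; exact Set.isEmpty_coe_sort.mpr rfl
  have : IsEmpty S.coe.ConnectedComponent :=
    ⟨fun c => SimpleGraph.ConnectedComponent.ind (fun v => (he.false v).elim) c⟩
  exact Nat.card_of_isEmpty

/-- Linear-arithmetic characterisation of the adjacency of `cycleFG n`. -/
lemma cycle_adj (n x y : ℕ) :
    (cycleFG n).Adj x y ↔ (x ≠ y ∧ x < n ∧ y < n ∧
      (y = x + 1 ∨ x = y + 1 ∨ (y = 0 ∧ x + 1 = n) ∨ (x = 0 ∧ y + 1 = n))) := by
  simp only [cycleFG, ofRel_adj, Set.mem_setOf_eq]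
  constructor
  · rintro ⟨hne, hx, hy, h | h⟩
    · rcases Nat.lt_or_ge (x + 1) n with h2 | h2
      · rw [Nat.mod_eq_of_lt h2] at h; exact ⟨hne, hx, hy, by omega⟩
      · have h3 : x + 1 = n := by omega
        rw [h3, Nat.mod_self] at h; exact ⟨hne, hx, hy, by omega⟩
    · rcases Nat.lt_or_ge (y + 1) n with h2 | h2
      · rw [Nat.mod_eq_of_lt h2] at h; exact ⟨hne, hx, hy, by omega⟩
      · have h3 : y + 1 = n := by omega
        rw [h3, Nat.mod_self] at h; exact ⟨hne, hx, hy, by omega⟩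
  · rintro ⟨hne, hx, hy, h | h | ⟨h1, h2⟩ | ⟨h1, h2⟩⟩
    · exact ⟨hne, hx, hy, Or.inl (by rw [Nat.mod_eq_of_lt (by omega)]; omega)⟩
    · exact ⟨hne, hx, hy, Or.inr (by rw [Nat.mod_eq_of_lt (by omega)]; omega)⟩
    · exact ⟨hne, hx, hy, Or.inl (by rw [h2, Nat.mod_self]; omega)⟩
    · exact ⟨hne, hx, hy, Or.inr (by rw [h2, Nat.mod_self]; omega)⟩

/-- `ite`-style characterisation of the adjacency of `bullFG l l1`. -/
lemma bull_adj (l l1 : ℕ) (hl : 3 ≤ l) (x y : ℕ) :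
    (bullFG l l1).Adj x y ↔ (x ≠ y ∧ x < l + l1 ∧ y < l + l1 ∧
      ((y = if x = l - 1 then 0 else x + 1) ∨ (x = if y = l - 1 then 0 else y + 1) ∨
       (y = if x = 0 then l else x) ∨ (x = if y = 0 then l else y))) := by
  simp only [bullFG, ofRel_adj, Set.mem_setOf_eq, snout_iff l]
  constructor
  · rintro ⟨hne, hx, hy, h⟩
    refine ⟨hne, hx, hy, ?_⟩
    rcases h with (⟨h1, h2 | h2⟩ | ⟨h1, h2, h3⟩ | ⟨h1, h2⟩) | (⟨h1, h2 | h2⟩ | ⟨h1, h2, h3⟩ | ⟨h1, h2⟩) <;>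
      split_ifs <;> omega
  · rintro ⟨hne, hx, hy, h⟩
    refine ⟨hne, hx, hy, ?_⟩
    rcases h with h | h | h | h
    · by_cases hc : x = l - 1
      · rw [if_pos hc] at h
        exact Or.inl (Or.inl ⟨by omega, Or.inr (by omega)⟩)
      · rw [if_neg hc] at h
        by_cases hc2 : x + 1 < l
        · exact Or.inl (Or.inl ⟨by omega, Or.inl (by omega)⟩)
        · exact Or.inl (Or.inr (Or.inl (by omega)))
    · by_cases hc : y = l - 1
      · rw [if_pos hc] at h
        exact Or.inr (Or.inl ⟨by omega, Or.inr (by omega)⟩)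
      · rw [if_neg hc] at h
        by_cases hc2 : y + 1 < l
        · exact Or.inr (Or.inl ⟨by omega, Or.inl (by omega)⟩)
        · exact Or.inr (Or.inr (Or.inl (by omega)))
    · by_cases hc : x = 0
      · rw [if_pos hc] at h
        exact Or.inl (Or.inr (Or.inr (by omega)))
      · rw [if_neg hc] at h
        omega
    · by_cases hc : y = 0
      · rw [if_pos hc] at h
        exact Or.inr (Or.inr (Or.inr (by omega)))
      · rw [if_neg hc] at h
        omega

/-- The intermediate graph after `k` admissible contractions of `C_{l+2*l1}`:
a cycle `0, …, l+l1-k, l+l1+k+1, …, l+2*l1-1, 0` together with the pendant path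
`l+l1-k, l+l1-k+1, …, l+l1`. -/
def midG (l l1 k : ℕ) : FG :=
  ofRel {x | x ≤ l + l1 ∨ (l + l1 + k + 1 ≤ x ∧ x < l + 2 * l1)}
    (fun i j =>
      j = (if i = l + 2 * l1 - 1 then 0 else i + 1) ∨
      j = (if i = l + l1 - k then
            (if l + l1 + k + 1 = l + 2 * l1 then 0 else l + l1 + k + 1) else i))

/-- The vertex set of the induced non-separating cycle of `midG l l1 k` used below. -/
def CsetFG (l l1 k : ℕ) : Set ℕ :=
  {x | x ≤ l + l1 - k ∨ (l + l1 + k + 1 ≤ x ∧ x < l + 2 * l1)}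

/-- The graph obtained after the final contraction: the bull with horn `l+1, …, l+l1`
attached to `0`. -/
def starG (l l1 : ℕ) : FG :=
  ofRel {x | x ≤ l + l1 ∧ x ≠ l}
    (fun i j =>
      j = (if i = l - 1 then 0 else i + 1) ∨
      j = (if i = 0 then l + 1 else i))

lemma cycle_eq_mid0 (l l1 : ℕ) (hl : 3 ≤ l) (hl1 : 1 ≤ l1) :
    cycleFG (l + 2 * l1) = midG l l1 0 := by
  apply SimpleGraph.Subgraph.ext
  · ext x
    simp only [cycleFG, midG, ofRel_verts, Set.mem_setOf_eq]
    omega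
  · ext x y
    rw [cycle_adj (l + 2 * l1) x y]
    simp only [midG, ofRel_adj, Set.mem_setOf_eq]
    constructor
    · rintro ⟨hne, hx, hy, h⟩
      refine ⟨hne, by omega, by omega, ?_⟩
      split_ifs <;> omega
    · rintro ⟨hne, hx, hy, h⟩
      refine ⟨hne, by omega, by omega, ?_⟩
      split_ifs at h <;> omega

lemma connected_mid (l l1 k : ℕ) (hl : 3 ≤ l) (hk : k + 1 ≤ l1) :
    (midG l l1 k).coe.Connected := by
  refine connected_of_parent (midG l l1 k) 0 ?_ (fun x => x) ?_
  · simp only [midG, ofRel_verts, Set.mem_setOf_eq]; omega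
  intro x hx hx0
  refine ⟨if x = l + l1 + k + 1 then l + l1 - k else x - 1, ?_⟩
  simp only [midG, ofRel_verts, ofRel_adj, Set.mem_setOf_eq] at hx ⊢
  split_ifs <;> omega

lemma connected_induced_cycle (l l1 k : ℕ) (hl : 3 ≤ l) (hk : k + 1 ≤ l1) :
    (((midG l l1 k).induce (CsetFG l l1 k)).coe).Connected := by
  refine connected_of_parent ((midG l l1 k).induce (CsetFG l l1 k)) 0 ?_ (fun x => x) ?_
  · simp only [SimpleGraph.Subgraph.induce_verts, CsetFG, Set.mem_setOf_eq]; omega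
  intro x hx hx0
  refine ⟨if x = l + l1 + k + 1 then l + l1 - k else x - 1, ?_⟩
  simp only [SimpleGraph.Subgraph.induce_verts, SimpleGraph.Subgraph.induce_adj,
    midG, CsetFG, ofRel_verts, ofRel_adj, Set.mem_setOf_eq] at hx ⊢
  split_ifs <;> omega

lemma induced_cycle_mid (l l1 k : ℕ) (hl : 3 ≤ l) (hk : k + 1 ≤ l1) :
    IsInducedCycleFG (midG l l1 k) (CsetFG l l1 k) := by
  refine ⟨?_, ?_, ?_, connected_induced_cycle l l1 k hl hk, ?_⟩
  · intro x hx
    simp only [CsetFG, Set.mem_setOf_eq] at hx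
    simp only [midG, ofRel_verts, Set.mem_setOf_eq]
    omega
  · apply Set.Finite.subset (Set.finite_Iio (l + 2 * l1))
    intro x hx
    simp only [CsetFG, Set.mem_setOf_eq] at hx
    simp only [Set.mem_Iio]
    omega
  · have h3 : ({0, 1, 2} : Set ℕ).ncard = 3 := by
      rw [Set.ncard_eq_three]
      exact ⟨0, 1, 2, by norm_num, by norm_num, by norm_num, rfl⟩
    rw [← h3]
    apply Set.ncard_le_ncard
    · intro x hx
      simp only [Set.mem_insert_iff, Set.mem_singleton_iff] at hx
      simp only [CsetFG, Set.mem_setOf_eq]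
      omega
    · apply Set.Finite.subset (Set.finite_Iio (l + 2 * l1))
      intro x hx
      simp only [CsetFG, Set.mem_setOf_eq] at hx
      simp only [Set.mem_Iio]
      omega
  · intro x hx
    have hx' : x ≤ l + l1 - k ∨ (l + l1 + k + 1 ≤ x ∧ x < l + 2 * l1) := hx
    have hset : {y | y ∈ CsetFG l l1 k ∧ (midG l l1 k).Adj x y} =
        {(if x = 0 then 1 else if x = l + l1 + k + 1 then l + l1 - k else x - 1),
         (if x = 0 then (if l + l1 + k + 1 < l + 2 * l1 then l + 2 * l1 - 1 else l + l1 - k)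
          else if x = l + l1 - k then
            (if l + l1 + k + 1 < l + 2 * l1 then l + l1 + k + 1 else 0)
          else if x = l + 2 * l1 - 1 then 0 else x + 1)} := by
      ext y
      simp only [Set.mem_setOf_eq, Set.mem_insert_iff, Set.mem_singleton_iff,
        CsetFG, midG, ofRel_adj, ofRel_verts]
      split_ifs <;> omega
    rw [hset, Set.ncard_pair (by split_ifs <;> omega)]

lemma nonsep_mid (l l1 k : ℕ) (hl : 3 ≤ l) (hk : k + 1 ≤ l1) :
    NonSeparatingFG (midG l l1 k) (CsetFG l l1 k) := by
  unfold NonSeparatingFG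
  rcases Nat.eq_zero_or_pos k with hk0 | hk0
  · subst hk0
    rw [ncompFG_eq_zero]
    · exact Nat.zero_le _
    · ext x
      simp only [SimpleGraph.Subgraph.deleteVerts_verts, Set.mem_diff, midG, CsetFG,
        ofRel_verts, Set.mem_setOf_eq, Set.mem_empty_iff_false, iff_false]
      omega
  · rw [ncompFG_eq_one _ (connected_mid l l1 k hl hk), ncompFG_eq_one]
    refine connected_of_parent ((midG l l1 k).deleteVerts (CsetFG l l1 k)) (l + l1) ?_
      (fun x => l + l1 - x) ?_
    · simp only [SimpleGraph.Subgraph.deleteVerts_verts, Set.mem_diff, midG, CsetFG,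
        ofRel_verts, Set.mem_setOf_eq]
      omega
    intro x hx hx0
    refine ⟨x + 1, ?_⟩
    simp only [SimpleGraph.Subgraph.deleteVerts_verts, SimpleGraph.Subgraph.deleteVerts_adj,
      Set.mem_diff, midG, CsetFG, ofRel_verts, ofRel_adj, Set.mem_setOf_eq] at hx ⊢
    split_ifs <;> omega

lemma ap_inter (l l1 k : ℕ) (hl : 3 ≤ l) (hk : k + 2 ≤ l1) :
    AdmissiblePair (midG l l1 k) (l + l1 - k - 1) (l + l1 + k + 1) := by
  refine ⟨by omega, l + l1 - k, ?_, ?_, CsetFG l l1 k, ?_, ?_, ?_,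
    induced_cycle_mid l l1 k hl (by omega), nonsep_mid l l1 k hl (by omega)⟩
  · simp only [midG, ofRel_adj, Set.mem_setOf_eq]
    split_ifs <;> omega
  · simp only [midG, ofRel_adj, Set.mem_setOf_eq]
    split_ifs <;> omega
  · simp only [CsetFG, Set.mem_setOf_eq]; omega
  · simp only [CsetFG, Set.mem_setOf_eq]; omega
  · simp only [CsetFG, Set.mem_setOf_eq]; omega

lemma ap_final (l l1 : ℕ) (hl : 3 ≤ l) (hl1 : 1 ≤ l1) :
    AdmissiblePair (midG l l1 (l1 - 1)) 0 l := by
  refine ⟨by omega, l + 1, ?_, ?_, CsetFG l l1 (l1 - 1), ?_, ?_, ?_,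
    induced_cycle_mid l l1 (l1 - 1) hl (by omega), nonsep_mid l l1 (l1 - 1) hl (by omega)⟩
  · simp only [midG, ofRel_adj, Set.mem_setOf_eq]
    split_ifs <;> omega
  · simp only [midG, ofRel_adj, Set.mem_setOf_eq]
    split_ifs <;> omega
  · simp only [CsetFG, Set.mem_setOf_eq]; omega
  · simp only [CsetFG, Set.mem_setOf_eq]; omega
  · simp only [CsetFG, Set.mem_setOf_eq]; omega

lemma contract_inter (l l1 k : ℕ) (hl : 3 ≤ l) (hk : k + 2 ≤ l1) :
    contractFG (midG l l1 k) (l + l1 - k - 1) (l + l1 + k + 1) = midG l l1 (k + 1) := by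
  apply SimpleGraph.Subgraph.ext
  · ext x
    simp only [contractFG_verts, midG, ofRel_verts, Set.mem_diff, Set.mem_setOf_eq,
      Set.mem_singleton_iff]
    omega
  · ext x y
    simp only [contractFG_adj, midG, ofRel_adj, ofRel_verts, Set.mem_setOf_eq]
    constructor
    · rintro ⟨hne, hxv, hyv, ⟨hne2, hx, hy, hd⟩ | ⟨hxu, hu, hne2, hx, hy, hd⟩ |
        ⟨hyu, hu, hne2, hx, hy, hd⟩⟩ <;>
        refine ⟨hne, by omega, by omega, ?_⟩ <;>
        rcases hd with (hd | hd) | (hd | hd) <;>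
        split_ifs at hd ⊢ <;> omega
    · rintro ⟨hne, hx, hy, h⟩
      refine ⟨hne, by omega, by omega, ?_⟩
      rcases h with (h | h) | (h | h)
      · exact Or.inl ⟨hne, by omega, by omega, Or.inl (Or.inl h)⟩
      · split_ifs at h with h1 h2
        · exact Or.inr (Or.inl ⟨by omega, by omega, by omega, by omega, by omega,
            Or.inl (Or.inl (by split_ifs <;> omega))⟩)
        · exact Or.inr (Or.inl ⟨by omega, by omega, by omega, by omega, by omega,
            Or.inl (Or.inl (by split_ifs <;> omega))⟩)
        · exact absurd h.symm hne
      · exact Or.inl ⟨hne, by omega, by omega, Or.inr (Or.inl h)⟩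
      · split_ifs at h with h1 h2
        · exact Or.inr (Or.inr ⟨by omega, by omega, by omega, by omega, by omega,
            Or.inr (Or.inl (by split_ifs <;> omega))⟩)
        · exact Or.inr (Or.inr ⟨by omega, by omega, by omega, by omega, by omega,
            Or.inr (Or.inl (by split_ifs <;> omega))⟩)
        · exact absurd h hne

lemma contract_final (l l1 : ℕ) (hl : 3 ≤ l) (hl1 : 1 ≤ l1) :
    contractFG (midG l l1 (l1 - 1)) 0 l = starG l l1 := by
  apply SimpleGraph.Subgraph.ext
  · ext x
    simp only [contractFG_verts, midG, starG, ofRel_verts, Set.mem_diff, Set.mem_setOf_eq,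
      Set.mem_singleton_iff]
    omega
  · ext x y
    simp only [contractFG_adj, midG, starG, ofRel_adj, ofRel_verts, Set.mem_setOf_eq]
    constructor
    · rintro ⟨hne, hxv, hyv, ⟨hne2, hx, hy, hd⟩ | ⟨hxu, hu, hne2, hx, hy, hd⟩ |
        ⟨hyu, hu, hne2, hx, hy, hd⟩⟩ <;>
        refine ⟨hne, by omega, by omega, ?_⟩ <;>
        rcases hd with (hd | hd) | (hd | hd) <;>
        split_ifs at hd ⊢ <;> omega
    · rintro ⟨hne, hx, hy, h⟩
      refine ⟨hne, by omega, by omega, ?_⟩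
      rcases h with (h | h) | (h | h)
      · split_ifs at h with h1
        · exact Or.inr (Or.inr ⟨by omega, by omega, by omega, by omega, by omega,
            Or.inl (Or.inl (by split_ifs <;> omega))⟩)
        · exact Or.inl ⟨hne, by omega, by omega, Or.inl (Or.inl (by split_ifs <;> omega))⟩
      · split_ifs at h with h1
        · exact Or.inl ⟨hne, by omega, by omega, Or.inr (Or.inr (by split_ifs <;> omega))⟩
        · exact absurd h.symm hne
      · split_ifs at h with h1
        · exact Or.inr (Or.inl ⟨by omega, by omega, by omega, by omega, by omega,
            Or.inr (Or.inl (by split_ifs <;> omega))⟩)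
        · exact Or.inl ⟨hne, by omega, by omega, Or.inr (Or.inl (by split_ifs <;> omega))⟩
      · split_ifs at h with h1
        · exact Or.inl ⟨hne, by omega, by omega, Or.inl (Or.inr (by split_ifs <;> omega))⟩
        · exact absurd h hne

lemma iso_star_bull (l l1 : ℕ) (hl : 3 ≤ l) (hl1 : 1 ≤ l1) :
    IsoFG (starG l l1) (bullFG l l1) := by
  refine ⟨⟨⟨fun x => ⟨if (x : ℕ) < l then (x : ℕ) else (x : ℕ) - 1, by
        have h := x.2
        simp only [starG, ofRel_verts, Set.mem_setOf_eq] at h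
        simp only [bullFG, ofRel_verts, Set.mem_setOf_eq]
        split_ifs <;> omega⟩,
      fun y => ⟨if (y : ℕ) < l then (y : ℕ) else (y : ℕ) + 1, by
        have h := y.2
        simp only [bullFG, ofRel_verts, Set.mem_setOf_eq] at h
        simp only [starG, ofRel_verts, Set.mem_setOf_eq]
        split_ifs <;> omega⟩,
      fun x => by
        have h := x.2
        simp only [starG, ofRel_verts, Set.mem_setOf_eq] at h
        apply Subtype.ext
        simp only
        split_ifs <;> omega,
      fun y => by
        have h := y.2
        simp only [bullFG, ofRel_verts, Set.mem_setOf_eq] at h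
        apply Subtype.ext
        simp only
        split_ifs <;> omega⟩, ?_⟩⟩
  intro a b
  have ha := a.2
  have hb := b.2
  simp only [starG, ofRel_verts, Set.mem_setOf_eq] at ha hb
  rw [SimpleGraph.Subgraph.coe_adj, SimpleGraph.Subgraph.coe_adj]
  simp only [Equiv.coe_fn_mk, SimpleGraph.Subgraph.coe_adj, bull_adj l l1 hl, starG,
    ofRel_adj, Set.mem_setOf_eq]
  dsimp only [DFunLike.coe, EquivLike.coe]
  split_ifs <;> omega

/-- For all integers `l ≥ 3` and `l1 ≥ 1`, the bull `B(l, l1)` is a bipartite minor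
of the cycle `C_{l + 2*l1}`. -/
theorem bull_isBipMinor_cycle (l l1 : ℕ) (hl : 3 ≤ l) (hl1 : 1 ≤ l1) :
    BipMinor (bullFG l l1) (cycleFG (l + 2 * l1)) := by
  have hchain : ∀ k, k + 1 ≤ l1 →
      Relation.ReflTransGen BStep (cycleFG (l + 2 * l1)) (midG l l1 k) := by
    intro k
    induction k with
    | zero =>
      intro _
      rw [cycle_eq_mid0 l l1 hl hl1]
    | succ k ih =>
      intro h
      have hstep : BStep (midG l l1 k) (midG l l1 (k + 1)) := by
        have := BStep.contract (midG l l1 k) (l + l1 - k - 1) (l + l1 + k + 1)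
          (ap_inter l l1 k hl (by omega))
        rwa [contract_inter l l1 k hl (by omega)] at this
      exact (ih (by omega)).tail hstep
  have hlast : BStep (midG l l1 (l1 - 1)) (starG l l1) := by
    have := BStep.contract (midG l l1 (l1 - 1)) 0 l (ap_final l l1 hl hl1)
    rwa [contract_final l l1 hl hl1] at this
  exact ⟨starG l l1, ((hchain (l1 - 1) (by omega)).tail hlast),
    iso_star_bull l l1 hl hl1⟩
end

section
/- There exist infinitely many pairs of bipartite graphs (G, H) such that H is a bipartite minor of G but H is not a minor of G. -/
open SimpleGraph

/-! ### Auxiliary lemmas -/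

private lemma mod_succ_eq (N a : ℕ) (ha : a < N) :
    (a + 1) % N = if a + 1 = N then 0 else a + 1 := by
  split
  · simp [*]
  · exact Nat.mod_eq_of_lt (by omega)

lemma cycAdj {N : ℕ} (hN : 3 ≤ N) (x y : ℕ) :
    (cycleFG N).Adj x y ↔ x < N ∧ y < N ∧
      (y = x + 1 ∨ x = y + 1 ∨ (x = 0 ∧ y = N - 1) ∨ (y = 0 ∧ x = N - 1)) := by
  show (x ≠ y ∧ x ∈ {x | x < N} ∧ y ∈ {x | x < N} ∧
      (y = (x + 1) % N ∨ x = (y + 1) % N)) ↔ _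
  simp only [Set.mem_setOf_eq]
  constructor
  · rintro ⟨hxy, hx, hy, h | h⟩
    · rw [mod_succ_eq N x hx] at h; split at h <;> omega
    · rw [mod_succ_eq N y hy] at h; split at h <;> omega
  · rintro ⟨hx, hy, h⟩
    refine ⟨by omega, hx, hy, ?_⟩
    rcases h with h | h | ⟨h1, h2⟩ | ⟨h1, h2⟩
    · left; rw [mod_succ_eq N x hx]; split <;> omega
    · right; rw [mod_succ_eq N y hy]; split <;> omega
    · right; rw [mod_succ_eq N y hy]; split <;> omega
    · left; rw [mod_succ_eq N x hx]; split <;> omega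

lemma cycNbrSet {N : ℕ} (hN : 3 ≤ N) {x : ℕ} (hx : x < N) :
    {y | (cycleFG N).Adj x y}.ncard = 2 := by
  by_cases h0 : x = 0
  · have hs : {y | (cycleFG N).Adj x y} = {1, N - 1} := by
      ext y
      simp only [Set.mem_setOf_eq, cycAdj hN, Set.mem_insert_iff, Set.mem_singleton_iff]
      omega
    rw [hs]; exact Set.ncard_pair (by omega)
  by_cases h1 : x = N - 1
  · have hs : {y | (cycleFG N).Adj x y} = {N - 2, 0} := by
      ext y
      simp only [Set.mem_setOf_eq, cycAdj hN, Set.mem_insert_iff, Set.mem_singleton_iff]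
      omega
    rw [hs]; exact Set.ncard_pair (by omega)
  · have hs : {y | (cycleFG N).Adj x y} = {x + 1, x - 1} := by
      ext y
      simp only [Set.mem_setOf_eq, cycAdj hN, Set.mem_insert_iff, Set.mem_singleton_iff]
      omega
    rw [hs]; exact Set.ncard_pair (by omega)

lemma cycNbrLe {N : ℕ} (hN : 3 ≤ N) (x : ℕ) :
    {y | (cycleFG N).Adj x y}.ncard ≤ 2 := by
  by_cases hx : x < N
  · exact le_of_eq (cycNbrSet hN hx)
  · have hs : {y | (cycleFG N).Adj x y} = ∅ := by
      ext y
      simp only [Set.mem_setOf_eq, cycAdj hN, Set.mem_empty_iff_false, iff_false]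
      omega
    simp [hs]

lemma cycParity {N : ℕ} (hN : 3 ≤ N) (hE : N % 2 = 0) {x y : ℕ}
    (h : (cycleFG N).Adj x y) : x % 2 ≠ y % 2 := by
  rw [cycAdj hN] at h; omega
lemma cycConn {N : ℕ} (hN : 3 ≤ N) :
    (((cycleFG N).induce {x | x < N}).coe).Connected := by
  have key : ∀ k, ∀ hk : k ∈ {x | x < N},
      (((cycleFG N).induce {x | x < N}).coe).Reachable ⟨k, hk⟩
        ⟨0, by exact show (0:ℕ) < N by omega⟩ := by
    intro k
    induction k with
    | zero => intro hk; exact Reachable.refl _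
    | succ k ih =>
      intro hk
      have hk0 : k + 1 < N := hk
      have hk' : k ∈ {x | x < N} := by simp only [Set.mem_setOf_eq]; omega
      have hadj : (((cycleFG N).induce {x | x < N}).coe).Adj ⟨k + 1, hk⟩ ⟨k, hk'⟩ := by
        rw [Subgraph.coe_adj, Subgraph.induce_adj]
        exact ⟨hk, hk', (cycAdj hN (k + 1) k).mpr ⟨by omega, by omega, by omega⟩⟩
      exact hadj.reachable.trans (ih hk')
  haveI : Nonempty ↥(((cycleFG N).induce {x | x < N}).verts) :=
    ⟨⟨0, by exact show (0:ℕ) < N by omega⟩⟩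
  exact ⟨fun u v => (key u.1 u.2).trans (key v.1 v.2).symm⟩

lemma admiss {N : ℕ} (hN : 8 ≤ N) : AdmissiblePair (cycleFG N) 0 2 := by
  have hN3 : 3 ≤ N := by omega
  refine ⟨by omega, 1,
    (cycAdj hN3 0 1).mpr ⟨by omega, by omega, by omega⟩,
    (cycAdj hN3 1 2).mpr ⟨by omega, by omega, by omega⟩,
    {x | x < N},
    by simp only [Set.mem_setOf_eq]; omega,
    by simp only [Set.mem_setOf_eq]; omega,
    by simp only [Set.mem_setOf_eq]; omega,
    ⟨fun y hy => hy, Set.finite_Iio N, ?_, cycConn hN3, ?_⟩, ?_⟩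
  · have hcard : ({x | x < N} : Set ℕ).ncard = N := by
      have hh : ({x | x < N} : Set ℕ) = ↑(Finset.range N) := by
        ext y; simp
      rw [hh, Set.ncard_coe_finset, Finset.card_range]
    omega
  · intro x hx
    have hs : {y | y ∈ {x | x < N} ∧ (cycleFG N).Adj x y} = {y | (cycleFG N).Adj x y} := by
      ext y
      simp only [Set.mem_setOf_eq]
      exact ⟨fun h => h.2, fun h => ⟨((cycAdj hN3 x y).mp h).2.1, h⟩⟩
    rw [hs]; exact cycNbrSet hN3 hx
  · unfold NonSeparatingFG ncompFG
    have h0 : Nat.card (((cycleFG N).deleteVerts {x | x < N}).coe.ConnectedComponent) = 0 :=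
      Nat.card_eq_zero.mpr (Or.inl ⟨fun c => c.ind (fun v => v.2.2 v.2.1)⟩)
    rw [h0]; exact Nat.zero_le _
def MaxDeg2 (K : FG) : Prop := K.verts.Finite ∧ ∀ x, {y | K.Adj x y}.ncard ≤ 2

lemma nbr_finite {K : FG} (hK : K.verts.Finite) (x : ℕ) : {y | K.Adj x y}.Finite :=
  hK.subset (fun _ hy => hy.snd_mem)

lemma mstep_maxdeg {K K' : FG} (h : MStep K K') (hK : MaxDeg2 K) : MaxDeg2 K' := by
  obtain ⟨hfin, hdeg⟩ := hK
  cases h with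
  | deleteVert v =>
    refine ⟨hfin.subset (fun x hx => hx.1), fun x => ?_⟩
    refine le_trans (Set.ncard_le_ncard ?_ (nbr_finite hfin x)) (hdeg x)
    intro y hy
    exact (Subgraph.deleteVerts_adj.mp hy).2.2.2.2
  | deleteEdge e =>
    refine ⟨hfin, fun x => ?_⟩
    refine le_trans (Set.ncard_le_ncard ?_ (nbr_finite hfin x)) (hdeg x)
    intro y hy
    exact ((Subgraph.deleteEdges_adj _ _ _).mp hy).1
  | contract u v huv =>
    refine ⟨hfin.subset (fun x hx => hx.1), fun x => ?_⟩
    by_cases hxv : x = v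
    · have hs : {y | (contractFG K u v).Adj x y} = ∅ := by
        ext y
        simp only [Set.mem_setOf_eq, Set.mem_empty_iff_false, iff_false]
        rintro ⟨h1, h2, h3, h4⟩
        exact h2 hxv
      simp [hs]
    by_cases hxu : x = u
    · have hsub : {y | (contractFG K u v).Adj x y} ⊆
          ({y | K.Adj x y} \ {v}) ∪ ({y | K.Adj v y} \ {x}) := by
        rintro y ⟨h1, h2, h3, h4 | ⟨_, _, h4⟩ | ⟨h4, _, _⟩⟩
        · exact Or.inl ⟨h4, h3⟩
        · exact Or.inr ⟨h4, fun hc => h1 (by rw [hc])⟩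
        · exact absurd (hxu.trans h4.symm) h1
      refine le_trans (Set.ncard_le_ncard hsub ?_) ?_
      · exact ((nbr_finite hfin x).diff).union ((nbr_finite hfin v).diff)
      refine le_trans (Set.ncard_union_le _ _) ?_
      have e1 : ({y | K.Adj x y} \ {v}).ncard = {y | K.Adj x y}.ncard - 1 :=
        Set.ncard_diff_singleton_of_mem (show K.Adj x v by rw [hxu]; exact huv)
      have e2 : ({y | K.Adj v y} \ {x}).ncard = {y | K.Adj v y}.ncard - 1 :=
        Set.ncard_diff_singleton_of_mem (show K.Adj v x by rw [hxu]; exact huv.symm)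
      have := hdeg x
      have := hdeg v
      omega
    · by_cases hav : K.Adj x v
      · have hsub : {y | (contractFG K u v).Adj x y} ⊆
            insert u ({y | K.Adj x y} \ {v}) := by
          rintro y ⟨h1, h2, h3, h4 | ⟨h4, _, _⟩ | ⟨h4, _, _⟩⟩
          · exact Or.inr ⟨h4, h3⟩
          · exact absurd h4 hxu
          · exact Or.inl h4
        refine le_trans (Set.ncard_le_ncard hsub
          (((nbr_finite hfin x).diff).insert u)) ?_
        refine le_trans (Set.ncard_insert_le _ _) ?_
        have e1 : ({y | K.Adj x y} \ {v}).ncard = {y | K.Adj x y}.ncard - 1 :=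
          Set.ncard_diff_singleton_of_mem hav
        have := hdeg x
        omega
      · have hsub : {y | (contractFG K u v).Adj x y} ⊆ {y | K.Adj x y} := by
          rintro y ⟨h1, h2, h3, h4 | ⟨h4, _, _⟩ | ⟨_, _, h4⟩⟩
          · exact h4
          · exact absurd h4 hxu
          · exact absurd h4 hav
        exact le_trans (Set.ncard_le_ncard hsub (nbr_finite hfin x)) (hdeg x)

lemma rtg_maxdeg {K K' : FG} (h : Relation.ReflTransGen MStep K K') (hK : MaxDeg2 K) :
    MaxDeg2 K' := by
  induction h with
  | refl => exact hK
  | tail _ hstep ih => exact mstep_maxdeg hstep ih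

lemma ncard_nbr_eq_card (K : FG) (v : ↥K.verts) :
    {y | K.Adj v.1 y}.ncard = Nat.card (K.coe.neighborSet v) := by
  rw [← Nat.card_coe_set_eq]
  exact Nat.card_congr
    { toFun := fun p => ⟨⟨p.1, p.2.snd_mem⟩, p.2⟩
      invFun := fun q => ⟨q.1.1, q.2⟩
      left_inv := fun p => rfl
      right_inv := fun q => rfl }
lemma deg_ge_three {N : ℕ} (hN : 8 ≤ N) :
    3 ≤ {y | (contractFG (cycleFG N) 0 2).Adj 0 y}.ncard := by
  have hN3 : 3 ≤ N := by omega
  have hsub : ({1, 3, N - 1} : Set ℕ) ⊆ {y | (contractFG (cycleFG N) 0 2).Adj 0 y} := by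
    intro y hy
    simp only [Set.mem_insert_iff, Set.mem_singleton_iff] at hy
    rcases hy with rfl | rfl | rfl
    · exact ⟨by omega, by omega, by omega,
        Or.inl ((cycAdj hN3 0 1).mpr ⟨by omega, by omega, by omega⟩)⟩
    · exact ⟨by omega, by omega, by omega,
        Or.inr (Or.inl ⟨rfl, show (0:ℕ) < N by omega,
          (cycAdj hN3 2 3).mpr ⟨by omega, by omega, by omega⟩⟩)⟩
    · exact ⟨by omega, by omega, by omega,
        Or.inl ((cycAdj hN3 0 (N - 1)).mpr ⟨by omega, by omega, by omega⟩)⟩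
  have h3 : ({1, 3, N - 1} : Set ℕ).ncard = 3 := by
    rw [Set.ncard_insert_of_notMem (by simp; omega),
      Set.ncard_pair (show 3 ≠ N - 1 by omega)]
  have hfin : {y | (contractFG (cycleFG N) 0 2).Adj 0 y}.Finite :=
    (Set.finite_Iio N).subset (fun y (hy : (contractFG (cycleFG N) 0 2).Adj 0 y) => hy.snd_mem.1)
  calc 3 = ({1, 3, N - 1} : Set ℕ).ncard := h3.symm
    _ ≤ _ := Set.ncard_le_ncard hsub hfin

lemma bipCycle {N : ℕ} (hN : 3 ≤ N) (hE : N % 2 = 0) : BipartiteFG (cycleFG N) := by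
  refine ⟨SimpleGraph.Coloring.mk (fun v => ⟨v.1 % 2, by omega⟩) ?_⟩
  intro v w hadj
  rw [Subgraph.coe_adj] at hadj
  have key := cycParity hN hE hadj
  exact fun hcon => key (congrArg Fin.val hcon)

lemma bipContract {N : ℕ} (hN : 8 ≤ N) (hE : N % 2 = 0) :
    BipartiteFG (contractFG (cycleFG N) 0 2) := by
  have hN3 : 3 ≤ N := by omega
  refine ⟨SimpleGraph.Coloring.mk (fun v => ⟨v.1 % 2, by omega⟩) ?_⟩
  intro v w hadj
  rw [Subgraph.coe_adj] at hadj
  have key : (v : ℕ) % 2 ≠ (w : ℕ) % 2 := by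
    obtain ⟨h1, h2, h3, h | ⟨hv0, _, h⟩ | ⟨hw0, _, h⟩⟩ := hadj
    · exact cycParity hN3 hE h
    · have := cycParity hN3 hE h; omega
    · have := cycParity hN3 hE h; omega
  exact fun hcon => key (congrArg Fin.val hcon)

lemma bipminor {N : ℕ} (hN : 8 ≤ N) :
    BipMinor (contractFG (cycleFG N) 0 2) (cycleFG N) :=
  ⟨contractFG (cycleFG N) 0 2,
    Relation.ReflTransGen.single (BStep.contract _ 0 2 (admiss hN)),
    ⟨RelIso.refl _⟩⟩

lemma noMinor {N : ℕ} (hN : 8 ≤ N) :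
    ¬ MinorFG (contractFG (cycleFG N) 0 2) (cycleFG N) := by
  rintro ⟨H', hsteps, ⟨f⟩⟩
  have hinv : MaxDeg2 H' :=
    rtg_maxdeg hsteps ⟨Set.finite_Iio N, fun x => cycNbrLe (by omega) x⟩
  have h0mem : (0 : ℕ) ∈ (contractFG (cycleFG N) 0 2).verts :=
    ⟨show (0:ℕ) < N by omega, by simp⟩
  have hcard : Nat.card ((contractFG (cycleFG N) 0 2).coe.neighborSet ⟨0, h0mem⟩)
      = Nat.card (H'.coe.neighborSet (f.symm ⟨0, h0mem⟩)) :=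
    Nat.card_congr (f.symm.mapNeighborSet ⟨0, h0mem⟩)
  have h1 : {y | (contractFG (cycleFG N) 0 2).Adj 0 y}.ncard
      = Nat.card ((contractFG (cycleFG N) 0 2).coe.neighborSet ⟨0, h0mem⟩) :=
    ncard_nbr_eq_card (contractFG (cycleFG N) 0 2) ⟨0, h0mem⟩
  have h2 : {y | H'.Adj ((f.symm ⟨0, h0mem⟩ : ↥H'.verts) : ℕ) y}.ncard
      = Nat.card (H'.coe.neighborSet (f.symm ⟨0, h0mem⟩)) :=
    ncard_nbr_eq_card H' (f.symm ⟨0, h0mem⟩)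
  have h3 := deg_ge_three hN
  have hle : {y | H'.Adj ((f.symm ⟨0, h0mem⟩ : ↥H'.verts) : ℕ) y}.ncard ≤ 2 :=
    hinv.2 _
  omega

lemma cardVerts (N : ℕ) : Nat.card ↥((cycleFG N).verts) = N := by
  rw [Nat.card_coe_set_eq]
  have hh : (cycleFG N).verts = ↑(Finset.range N) := by
    ext y
    show y < N ↔ _
    simp
  rw [hh, Set.ncard_coe_finset, Finset.card_range]
/-- There exist infinitely many pairs of bipartite graphs `(G, H)` such that `H`
is a bipartite minor of `G` but `H` is not a minor of `G` (infinitude is expressed by a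
sequence of such pairs that are pairwise non-isomorphic). -/
theorem infinitely_many_bipMinor_not_minor :
    ∃ G H : ℕ → FG,
      (∀ n, (G n).verts.Finite ∧ (H n).verts.Finite ∧
        BipartiteFG (G n) ∧ BipartiteFG (H n) ∧
        BipMinor (H n) (G n) ∧ ¬ MinorFG (H n) (G n)) ∧
      (∀ m n, IsoFG (G m) (G n) → IsoFG (H m) (H n) → m = n) := by
  refine ⟨fun n => cycleFG (2 * n + 8), fun n => contractFG (cycleFG (2 * n + 8)) 0 2, ?_, ?_⟩
  · intro n
    have hN : 8 ≤ 2 * n + 8 := by omega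
    exact ⟨Set.finite_Iio _, (Set.finite_Iio _).subset (fun x hx => hx.1),
      bipCycle (by omega) (by omega), bipContract hN (by omega), bipminor hN, noMinor hN⟩
  · rintro m n ⟨f⟩ -
    have hc := Nat.card_congr f.toEquiv
    rw [cardVerts, cardVerts] at hc
    omega
end

section
/- If G is a bipartite graph and H is a bipartite minor of G, then H is bipartite. In particular, performing an admissible contraction on a bipartite graph yields a bipartite graph. -/
open SimpleGraph

lemma bipartite_of_hom {H K : FG} (f : H.coe →g K.coe) (h : BipartiteFG K) : BipartiteFG H := by
  obtain ⟨c⟩ := h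
  exact ⟨SimpleGraph.Coloring.mk (fun x => c (f x)) (fun hadj => c.valid (f.map_adj hadj))⟩

lemma fin2_eq {a b d : Fin 2} (h1 : a ≠ b) (h2 : d ≠ b) : a = d := by omega

lemma contract_bipartite (G : FG) (u v : ℕ) (hbip : BipartiteFG G)
    (hadm : AdmissiblePair G u v) : BipartiteFG (contractFG G u v) := by
  obtain ⟨c⟩ := hbip
  obtain ⟨hne, w, huw, hwv, -⟩ := hadm
  have hu : u ∈ G.verts := G.edge_vert huw
  have hv : v ∈ G.verts := G.edge_vert hwv.symm
  have hcuv : c ⟨u, hu⟩ = c ⟨v, hv⟩ :=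
    fin2_eq (c.valid huw.coe) (c.valid hwv.symm.coe)
  refine ⟨SimpleGraph.Coloring.mk (fun x => c ⟨x.1, x.2.1⟩) ?_⟩
  rintro ⟨x, hx⟩ ⟨y, hy⟩ hadj
  obtain ⟨hxy, hxv, hyv, h | ⟨hxu, -, h⟩ | ⟨hyu, -, h⟩⟩ := hadj
  · exact c.valid h.coe
  · have hxu' : x = u := hxu
    subst hxu'
    intro hcc
    exact c.valid h.coe (hcuv.symm.trans hcc)
  · have hyu' : y = u := hyu
    subst hyu'
    intro hcc
    exact c.valid h.coe (hcc.trans hcuv)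

lemma bstep_bipartite {A B : FG} (h : BStep A B) (hbip : BipartiteFG A) : BipartiteFG B := by
  cases h with
  | deleteVert v =>
      exact bipartite_of_hom (SimpleGraph.Subgraph.inclusion A.deleteVerts_le) hbip
  | deleteEdge e =>
      exact bipartite_of_hom (SimpleGraph.Subgraph.inclusion (A.deleteEdges_le _)) hbip
  | contract u v hadm => exact contract_bipartite A u v hbip hadm

lemma steps_bipartite {A B : FG} (h : Relation.ReflTransGen BStep A B)
    (hbip : BipartiteFG A) : BipartiteFG B := by
  induction h with
  | refl => exact hbip
  | tail _ step ih => exact bstep_bipartite step ih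

/-- If `G` is a (finite) bipartite graph and `H` is a bipartite minor of `G`,
then `H` is bipartite.  In particular, performing an admissible contraction on a bipartite
graph yields a bipartite graph. -/
theorem bipMinor_preserves_bipartite :
    (∀ G H : FG, G.verts.Finite → BipartiteFG G → BipMinor H G → BipartiteFG H) ∧
    (∀ (G : FG) (u v : ℕ), G.verts.Finite → BipartiteFG G → AdmissiblePair G u v →
      BipartiteFG (contractFG G u v)) := by
  constructor
  · rintro G H - hbip ⟨H', hsteps, ⟨e⟩⟩
    exact bipartite_of_hom e.symm.toHom (steps_bipartite hsteps hbip)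
  · intro G u v _ hbip hadm
    exact contract_bipartite G u v hbip hadm
end

section
/- No admissible contraction can be performed on a forest; consequently, for forests F_1 and F_2, F_1 is a bipartite minor of F_2 if and only if F_1 is isomorphic to a subgraph of F_2. -/
open SimpleGraph

lemma acyclic_of_injHom {V W : Type*} {G : SimpleGraph V} {H : SimpleGraph W}
    (f : G →g H) (hf : Function.Injective f) (hH : H.IsAcyclic) : G.IsAcyclic :=
  fun _ c hc => hH (c.map f) ((Walk.map_isCycle_iff_of_injective hf).mpr hc)

lemma forestFG_le {H G : FG} (h : H ≤ G) (hG : ForestFG G) : ForestFG H :=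
  acyclic_of_injHom (Subgraph.inclusion h) (Subgraph.inclusion.injective h) hG

lemma edgeSetFinite {G : FG} (h : G.verts.Finite) : G.edgeSet.Finite := by
  apply Set.Finite.subset (((h.prod h).image (fun p => s(p.1, p.2))))
  intro e he
  induction e with
  | _ x y =>
    rw [Subgraph.mem_edgeSet] at he
    exact ⟨(x, y), ⟨he.fst_mem, he.snd_mem⟩, rfl⟩

lemma steps_deleteVerts (G : FG) {U : Set ℕ} (hU : U.Finite) :
    Relation.ReflTransGen BStep G (G.deleteVerts U) := by
  refine Set.Finite.induction_on (motive := fun s _ => Relation.ReflTransGen BStep G (G.deleteVerts s)) U hU ?_ ?_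
  · rw [Subgraph.deleteVerts_empty]
  · intro a s _ _ ih
    have : G.deleteVerts (insert a s) = (G.deleteVerts s).deleteVerts {a} := by
      rw [Subgraph.deleteVerts_deleteVerts, Set.union_singleton]
    rw [this]
    exact ih.tail (BStep.deleteVert _ a)

lemma steps_deleteEdges (G : FG) {D : Set (Sym2 ℕ)} (hD : D.Finite) :
    Relation.ReflTransGen BStep G (G.deleteEdges D) := by
  refine Set.Finite.induction_on (motive := fun s _ => Relation.ReflTransGen BStep G (G.deleteEdges s)) D hD ?_ ?_
  · rw [Subgraph.deleteEdges_empty_eq]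
  · intro e s _ _ ih
    have : G.deleteEdges (insert e s) = (G.deleteEdges s).deleteEdges {e} := by
      rw [Subgraph.deleteEdges_deleteEdges, Set.union_singleton]
    rw [this]
    exact ih.tail (BStep.deleteEdge _ e)

lemma steps_of_le {S G : FG} (hG : G.verts.Finite) (hS : S ≤ G) :
    Relation.ReflTransGen BStep G S := by
  set G' := G.deleteVerts (G.verts \ S.verts) with hG'
  have h1 : Relation.ReflTransGen BStep G G' :=
    steps_deleteVerts G (hG.subset Set.diff_subset)
  have hverts : G'.verts = S.verts := by
    simp only [hG', Subgraph.deleteVerts_verts, Set.diff_diff_right,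
      Set.diff_self, Set.empty_union]
    exact Set.inter_eq_self_of_subset_right hS.1
  have hG'fin : G'.verts.Finite := hverts ▸ hG.subset hS.1
  set D := G'.edgeSet \ S.edgeSet with hD
  have h2 : Relation.ReflTransGen BStep G' (G'.deleteEdges D) :=
    steps_deleteEdges G' ((edgeSetFinite hG'fin).subset Set.diff_subset)
  have h3 : G'.deleteEdges D = S := by
    ext x y
    · rw [Subgraph.deleteEdges_verts, hverts]
    · simp only [Subgraph.deleteEdges_adj, hD, Set.mem_diff, Subgraph.mem_edgeSet, not_and,
        not_not]
      constructor
      · rintro ⟨hadj, h⟩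
        exact h hadj
      · intro hadj
        refine ⟨?_, fun _ => hadj⟩
        have hx : x ∈ S.verts := S.edge_vert hadj
        have hy : y ∈ S.verts := S.edge_vert hadj.symm
        exact ⟨⟨hS.1 hx, fun h => h.2 hx⟩, ⟨hS.1 hy, fun h => h.2 hy⟩, hS.2 hadj⟩
  exact h1.trans (h3 ▸ h2)

lemma no_admissible (F : FG) (hF : ForestFG F) (u v : ℕ) : ¬ AdmissiblePair F u v := by
  rintro ⟨hne, w, h1, h2, C, huC, hwC, hvC, ⟨hCsub, hCfin, hC3, hconn, hdeg⟩, -⟩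
  classical
  haveI : Fintype ↥C := hCfin.fintype
  set G' : SimpleGraph ↥C := (F.induce C).coe with hG'
  have hle : F.induce C ≤ F := ⟨hCsub, fun _ _ h => h.2.2⟩
  have hacyc : G'.IsAcyclic :=
    acyclic_of_injHom (Subgraph.inclusion hle) (Subgraph.inclusion.injective hle) hF
  have htree : G'.IsTree := ⟨hconn, hacyc⟩
  have hcard := htree.card_edgeFinset
  have hdeg' : ∀ a : ↥C, G'.degree a = 2 := by
    intro a
    have himg : Subtype.val '' (G'.neighborSet a) = {y | y ∈ C ∧ F.Adj ↑a y} := by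
      ext y
      constructor
      · rintro ⟨b, hb, rfl⟩
        exact ⟨b.2, hb.2.2⟩
      · rintro ⟨hyC, hadj⟩
        exact ⟨⟨y, hyC⟩, ⟨a.2, hyC, hadj⟩, rfl⟩
    have : (G'.neighborSet a).ncard = 2 := by
      rw [← Set.ncard_image_of_injective _ Subtype.val_injective, himg]
      exact hdeg a a.2
    rwa [Set.ncard_eq_toFinset_card', ← SimpleGraph.neighborFinset_def,
      ← SimpleGraph.degree] at this
  have hsum := G'.sum_degrees_eq_twice_card_edges
  rw [Finset.sum_congr rfl (fun a _ => hdeg' a), Finset.sum_const, Finset.card_univ,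
    smul_eq_mul] at hsum
  have hn : 3 ≤ Fintype.card ↥C := by
    rwa [← Nat.card_coe_set_eq, Nat.card_eq_fintype_card] at hC3
  rw [← hcard] at hsum
  omega


/-- No admissible contraction can be performed on a forest; consequently, for
(finite) forests `F1` and `F2`, `F1` is a bipartite minor of `F2` if and only if `F1` is
isomorphic to a subgraph of `F2`. -/
theorem forest_no_admissible_and_bipMinor_iff_subgraph :
    (∀ F : FG, ForestFG F → ∀ u v : ℕ, ¬ AdmissiblePair F u v) ∧
    (∀ F1 F2 : FG, F1.verts.Finite → F2.verts.Finite → ForestFG F1 → ForestFG F2 →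
      (BipMinor F1 F2 ↔ IsSubgraphFG F1 F2)) := by
  refine ⟨fun F hF u v => no_admissible F hF u v, fun F1 F2 h1fin h2fin hF1 hF2 => ?_⟩
  constructor
  · rintro ⟨H', hchain, hiso⟩
    refine ⟨H', ?_, hiso⟩
    clear hiso
    induction hchain with
    | refl => exact le_refl F2
    | tail _ hstep ih =>
      cases hstep with
      | deleteVert v => exact Subgraph.deleteVerts_le.trans ih
      | deleteEdge e => exact (Subgraph.deleteEdges_le _).trans ih
      | contract u v h => exact absurd h (no_admissible _ (forestFG_le ih hF2) u v)
  · rintro ⟨S, hle, hiso⟩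
    exact ⟨S, steps_of_le h2fin hle, hiso⟩
end
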